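/- arXiv:1101.5894 — 3 statements merged into one kernel-verified Lean document; each statement's English description precedes it below -/
import Mathlib

section
/- A map f : Q⁴ → Q⁴ over an ordered field Q that is a bijection preserving the Minkowski quadratic form differences (μ(f(x̄),f(ȳ)) = μ(x̄,ȳ) for all x̄, ȳ, where μ(x̄,ȳ) = (x₁−y₁)²+(x₂−y₂)²+(x₃−y₃)²−(x₄−y₄)²) maps lines to lines; in particular, if ȳ = x̄ + λ(z̄−x̄) with x̄, z̄ timelike separated (μ(x̄,z̄) < 0), then f(ȳ) = f(x̄) + λ(f(z̄) − f(x̄)). -/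
def mu {Q : Type} [Field Q] [LinearOrder Q] [IsStrictOrderedRing Q] (x y : Fin 4 → Q) : Q :=
  (x 0 - y 0)^2 + (x 1 - y 1)^2 + (x 2 - y 2)^2 - (x 3 - y 3)^2

/-- The Minkowski bilinear form. -/
def Bform {Q : Type} [Field Q] [LinearOrder Q] [IsStrictOrderedRing Q] (u v : Fin 4 → Q) : Q :=
  u 0 * v 0 + u 1 * v 1 + u 2 * v 2 - u 3 * v 3

lemma mu_eq_B {Q : Type} [Field Q] [LinearOrder Q] [IsStrictOrderedRing Q] (x y : Fin 4 → Q) :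
    mu x y = Bform (x - y) (x - y) := by
  simp [mu, Bform, Pi.sub_apply]; ring

lemma B_polar {Q : Type} [Field Q] [LinearOrder Q] [IsStrictOrderedRing Q] (p q : Fin 4 → Q) :
    2 * Bform p q = Bform p p + Bform q q - Bform (p - q) (p - q) := by
  simp [Bform, Pi.sub_apply]; ring

lemma B_sub_smul {Q : Type} [Field Q] [LinearOrder Q] [IsStrictOrderedRing Q] (p q w : Fin 4 → Q) (l : Q) :
    Bform (p - l • q) w = Bform p w - l * Bform q w := by
  simp [Bform, Pi.sub_apply, Pi.smul_apply, smul_eq_mul]; ring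

lemma B_smul_left {Q : Type} [Field Q] [LinearOrder Q] [IsStrictOrderedRing Q] (p w : Fin 4 → Q) (l : Q) :
    Bform (l • p) w = l * Bform p w := by
  simp [Bform, Pi.smul_apply, smul_eq_mul]; ring

lemma B_nondeg {Q : Type} [Field Q] [LinearOrder Q] [IsStrictOrderedRing Q] (p : Fin 4 → Q)
    (h : ∀ w, Bform p w = 0) : p = 0 := by
  funext i
  fin_cases i
  · have := h (fun j => if j = 0 then 1 else 0); simpa [Bform] using this
  · have := h (fun j => if j = 1 then 1 else 0); simpa [Bform] using this
  · have := h (fun j => if j = 2 then 1 else 0); simpa [Bform] using this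
  · have := h (fun j => if j = 3 then 1 else 0)
    simp [Bform] at this
    simpa using this

theorem mu_preserving_maps_lines_to_lines {Q : Type} [Field Q] [LinearOrder Q] [IsStrictOrderedRing Q]
    (f : (Fin 4 → Q) → (Fin 4 → Q))
    (hbij : Function.Bijective f)
    (hmu : ∀ x y, mu (f x) (f y) = mu x y)
    (x y z : Fin 4 → Q) (l : Q)
    (htime : mu x z < 0)
    (hy : y = fun i => x i + l * (z i - x i)) :
    f y = fun i => f x i + l * (f z i - f x i) := by
  set g : (Fin 4 → Q) → (Fin 4 → Q) := fun v => f (x + v) - f x with hg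
  have hgsub : ∀ u v, g u - g v = f (x + u) - f (x + v) := by
    intro u v; simp only [hg]; abel
  have hQ : ∀ u v, Bform (g u - g v) (g u - g v) = Bform (u - v) (u - v) := by
    intro u v
    rw [hgsub]
    have h1 : Bform (f (x + u) - f (x + v)) (f (x + u) - f (x + v))
        = mu (f (x + u)) (f (x + v)) := (mu_eq_B _ _).symm
    have h2 : (x + u) - (x + v) = u - v := by abel
    rw [h1, hmu, mu_eq_B, h2]
  have hg0 : g 0 = 0 := by simp [hg]
  have hQ0 : ∀ u, Bform (g u) (g u) = Bform u u := by
    intro u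
    have := hQ u 0
    simpa [hg0] using this
  have hB : ∀ u v, Bform (g u) (g v) = Bform u v := by
    intro u v
    have h2 : 2 * Bform (g u) (g v) = 2 * Bform u v := by
      rw [B_polar, B_polar, hQ0, hQ0, hQ]
    exact mul_left_cancel₀ (two_ne_zero) h2
  have hsurj : ∀ w, ∃ u, g u = w := by
    intro w
    obtain ⟨a, ha⟩ := hbij.2 (w + f x)
    exact ⟨a - x, by simp [hg, add_sub_cancel, ha]⟩
  set u : Fin 4 → Q := l • (z - x) with hu
  have hyu : y = x + u := by
    funext i
    simp [hy, hu, Pi.smul_apply, Pi.sub_apply, smul_eq_mul]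
  have hkey : g u = l • g (z - x) := by
    have hz : g u - l • g (z - x) = 0 := by
      apply B_nondeg
      intro w
      obtain ⟨t, ht⟩ := hsurj w
      rw [← ht, B_sub_smul, hB, hB, hu, B_smul_left]
      ring
    linear_combination (norm := abel) hz
  have hgzx : g (z - x) = f z - f x := by
    simp [hg, add_sub_cancel]
  have : f y - f x = l • (f z - f x) := by
    rw [hyu, ← hgzx]
    exact hkey
  funext i
  have := congrFun this i
  simp [Pi.sub_apply, Pi.smul_apply, smul_eq_mul] at this
  linarith
end

section
/- Time dilation in SpecRel: suppose m and k are inertial observers, and according to m, observer k passes through (0,0,0,0) and moves with velocity v along the first spatial axis, 0 ≤ v < 1 (i.e., W(m,k,x̄) holds exactly for points x̄ of the form (v·t, 0, 0, t)). If the worldview transformation w from k's coordinates to m's coordinates is an affine bijection preserving μ and fixing the correspondence of worldlines (w maps k's time axis onto k's worldline as seen by m, with w(0,0,0,0)=(0,0,0,0)), then the coordinate time in m between the images of k's clock ticks (0,0,0,0) and (0,0,0,1) is 1/√(1−v²), i.e., the fourth coordinate of w(0,0,0,1) has absolute value 1/√(1−v²), provided √(1−v²) exists in Q. -/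
theorem time_dilation {Q : Type} [Field Q] [LinearOrder Q] [IsStrictOrderedRing Q]
    (v s : Q) (hv0 : 0 ≤ v) (hv1 : v < 1)
    (hs : s ^ 2 = 1 - v ^ 2) (hspos : 0 < s)
    (w : (Fin 4 → Q) → (Fin 4 → Q))
    (hbij : Function.Bijective w)
    (haff : ∃ (L : (Fin 4 → Q) → (Fin 4 → Q)) (b : Fin 4 → Q),
      IsLinearMap Q L ∧ ∀ x, w x = fun i => L x i + b i)
    (hmu : ∀ x y, mu (w x) (w y) = mu x y)
    (h0 : w 0 = 0)
    (haxis : ∀ y : Fin 4 → Q,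
      (∃ t : Q, w ![0, 0, 0, t] = y) ↔ (∃ t : Q, y = ![v * t, 0, 0, t])) :
    |w ![0, 0, 0, 1] 3| = 1 / s := by
  obtain ⟨t, ht⟩ := (haxis (w ![0, 0, 0, 1])).mp ⟨1, rfl⟩
  have hm := hmu ![0, 0, 0, 1] 0
  have h001 : (![(0:Q), 0, 0, 1] : Fin 4 → Q) = ![0, 0, 0, (1:Q)] := rfl
  rw [h0, ht] at hm
  simp only [mu, Matrix.cons_val_zero, Matrix.cons_val_one, Matrix.head_cons,
    Matrix.cons_val_two, Matrix.tail_cons, Matrix.cons_val_three,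
    Pi.zero_apply] at hm
  -- hm : (v*t)^2 + ... - t^2 = ...
  have ht3 : w ![0, 0, 0, 1] 3 = t := by rw [ht]; rfl
  rw [ht3]
  have hsne : s ≠ 0 := ne_of_gt hspos
  have key : t ^ 2 = (1 / s) ^ 2 := by
    field_simp
    nlinarith [hm]
  rcases sq_eq_sq_iff_eq_or_eq_neg.mp key with h | h
  · rw [h]; exact abs_of_pos (by positivity)
  · rw [h]; rw [abs_neg]; exact abs_of_pos (by positivity)
end

section
/- In an ordered field Q, if a map f : Q⁴ → Q⁴ preserves the Minkowski relation 'lightlike separation' in both directions (μ(x̄,ȳ) = 0 ↔ μ(f(x̄),f(ȳ)) = 0 for all x̄, ȳ), is bijective, and is affine, then there is a nonzero constant c ∈ Q such that μ(f(x̄),f(ȳ)) = c·μ(x̄,ȳ) for all x̄, ȳ. -/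
theorem lightlike_preserving_affine_scales_mu {Q : Type} [Field Q] [LinearOrder Q] [IsStrictOrderedRing Q]
    (heucl : ∀ q : Q, 0 ≤ q → ∃ r : Q, r ^ 2 = q)
    (f : (Fin 4 → Q) → (Fin 4 → Q))
    (hbij : Function.Bijective f)
    (haff : ∃ (L : (Fin 4 → Q) → (Fin 4 → Q)) (b : Fin 4 → Q),
      IsLinearMap Q L ∧ ∀ x, f x = fun i => L x i + b i)
    (hlight : ∀ x y, mu x y = 0 ↔ mu (f x) (f y) = 0) :
    ∃ c : Q, c ≠ 0 ∧ ∀ x y, mu (f x) (f y) = c * mu x y := by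
  obtain ⟨L, b, hL, hfb⟩ := haff
  have hLsub : ∀ x y : Fin 4 → Q, L (x - y) = L x - L y := by
    intro x y
    have := map_sub (IsLinearMap.mk' L hL) x y
    simpa using this
  set e : Fin 4 → Fin 4 → Q := fun i j => if i = j then 1 else 0 with he
  set u : Fin 4 → Fin 4 → Q := fun i => L (e i) with hu
  have hdec : ∀ v : Fin 4 → Q, ∀ j, L v j =
      v 0 * u 0 j + v 1 * u 1 j + v 2 * u 2 j + v 3 * u 3 j := by
    intro v j
    have hv : v = v 0 • e 0 + v 1 • e 1 + v 2 • e 2 + v 3 • e 3 := by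
      funext k; fin_cases k <;> simp [he]
    calc L v j = L (v 0 • e 0 + v 1 • e 1 + v 2 • e 2 + v 3 • e 3) j := by rw [← hv]
      _ = _ := by
          simp [hL.map_add, hL.map_smul, hu, smul_eq_mul]
  set A : Fin 4 → Fin 4 → Q := fun i j =>
    u i 0 * u j 0 + u i 1 * u j 1 + u i 2 * u j 2 - u i 3 * u j 3 with hA
  have hQ : ∀ v : Fin 4 → Q, mu (L v) 0 =
      v 0 ^ 2 * A 0 0 + v 1 ^ 2 * A 1 1 + v 2 ^ 2 * A 2 2 + v 3 ^ 2 * A 3 3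
      + 2 * (v 0 * v 1) * A 0 1 + 2 * (v 0 * v 2) * A 0 2 + 2 * (v 0 * v 3) * A 0 3
      + 2 * (v 1 * v 2) * A 1 2 + 2 * (v 1 * v 3) * A 1 3 + 2 * (v 2 * v 3) * A 2 3 := by
    intro v
    simp only [mu, hdec, hA, Pi.zero_apply]
    ring
  have hmuf : ∀ x y : Fin 4 → Q, mu (f x) (f y) = mu (L (x - y)) 0 := by
    intro x y
    simp only [mu, hfb, hLsub, Pi.sub_apply, Pi.zero_apply]
    ring
  have hnull : ∀ v : Fin 4 → Q, mu v 0 = 0 → mu (L v) 0 = 0 := by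
    intro v hv
    have h := (hlight v 0).mp hv
    rw [hmuf, sub_zero] at h
    exact h
  obtain ⟨s, hs⟩ := heucl 2 (by norm_num)
  have E1 := hnull ![1,0,0,1] (by simp [mu, Matrix.cons_val])
  have E2 := hnull ![1,0,0,-1] (by simp [mu, Matrix.cons_val])
  have E3 := hnull ![0,1,0,1] (by simp [mu, Matrix.cons_val])
  have E4 := hnull ![0,1,0,-1] (by simp [mu, Matrix.cons_val])
  have E5 := hnull ![0,0,1,1] (by simp [mu, Matrix.cons_val])
  have E6 := hnull ![0,0,1,-1] (by simp [mu, Matrix.cons_val])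
  have W01 := hnull ![1,1,0,s] (by simp [mu, Matrix.cons_val]; linear_combination -hs)
  have W02 := hnull ![1,0,1,s] (by simp [mu, Matrix.cons_val]; linear_combination -hs)
  have W12 := hnull ![0,1,1,s] (by simp [mu, Matrix.cons_val]; linear_combination -hs)
  rw [hQ] at E1 E2 E3 E4 E5 E6 W01 W02 W12
  simp only [Matrix.cons_val] at E1 E2 E3 E4 E5 E6 W01 W02 W12
  norm_num at E1 E2 E3 E4 E5 E6 W01 W02 W12
  have hA03 : A 0 3 = 0 := by linarith
  have hA33 : A 3 3 = - A 0 0 := by linarith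
  have hA13 : A 1 3 = 0 := by linarith
  have hA11 : A 1 1 = A 0 0 := by linarith
  have hA23 : A 2 3 = 0 := by linarith
  have hA22 : A 2 2 = A 0 0 := by linarith
  have hA01 : A 0 1 = 0 := by
    linear_combination W01/2 - hA11/2 - hA33 - (A 3 3)/2*hs - s*hA03 - s*hA13
  have hA02 : A 0 2 = 0 := by
    linear_combination W02/2 - hA22/2 - hA33 - (A 3 3)/2*hs - s*hA03 - s*hA23
  have hA12 : A 1 2 = 0 := by
    linear_combination W12/2 - hA11/2 - hA22/2 - hA33 - (A 3 3)/2*hs - s*hA13 - s*hA23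
  refine ⟨A 0 0, ?_, ?_⟩
  · intro hc
    have h1 : mu (![1,0,0,0] : Fin 4 → Q) 0 ≠ 0 := by simp [mu, Matrix.cons_val]
    apply h1
    have h2 : mu (L ![1,0,0,0]) 0 = 0 := by
      rw [hQ]
      simp only [Matrix.cons_val]
      norm_num [hc, hA01, hA02, hA03]
    have h3 : mu (f ![1,0,0,0]) (f 0) = 0 := by
      rw [hmuf, sub_zero]; exact h2
    exact (hlight ![1,0,0,0] 0).mpr h3
  · intro x y
    rw [hmuf, hQ]
    have : mu x y = mu (x - y) 0 := by
      simp only [mu, Pi.sub_apply, Pi.zero_apply]; ring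
    rw [this]
    simp only [mu, Pi.sub_apply, Pi.zero_apply]
    linear_combination (x 1 - y 1)^2 * hA11 + (x 2 - y 2)^2 * hA22 + (x 3 - y 3)^2 * hA33
      + 2*((x 0 - y 0)*(x 1 - y 1))*hA01 + 2*((x 0 - y 0)*(x 2 - y 2))*hA02
      + 2*((x 0 - y 0)*(x 3 - y 3))*hA03 + 2*((x 1 - y 1)*(x 2 - y 2))*hA12
      + 2*((x 1 - y 1)*(x 3 - y 3))*hA13 + 2*((x 2 - y 2)*(x 3 - y 3))*hA23
end
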